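/- Let C = GRS_k(x,y) ⊆ F_q^n, let λ, a ∈ F_q^n, let C_pub := {p + ⟨λ,p⟩ a : p ∈ C}, and let z_1, z_2, z_3 ∈ C_pub with ⟨λ, p_i⟩ = 0 for the corresponding p_i ∈ C (i.e., z_i ∈ C ∩ ⟨λ⟩^⊥). Then for every basis (g_1,…,g_k) of C_pub, the span of {z_i ∗ g_j : 1 ≤ i ≤ 3, 1 ≤ j ≤ k} is contained in C² + span(z_1∗a, z_2∗a, z_3∗a), and hence has dimension at most 2k+2. -/

import Mathlib

open Submodule Polynomial Matrix

/-- The star (componentwise) product code of two linear codes. -/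
noncomputable def starProd {F : Type*} [Field F] {ι : Type*} (A B : Submodule F (ι → F)) :
    Submodule F (ι → F) :=
  Submodule.span F {w | ∃ a ∈ A, ∃ b ∈ B, w = a * b}

/-- The generalized Reed-Solomon code of dimension `k` with support `x` and multipliers `y`. -/
noncomputable def GRS {F : Type*} [Field F] {ι : Type*} (k : ℕ) (x y : ι → F) :
    Submodule F (ι → F) :=
  Submodule.span F
    {c | ∃ p : Polynomial F, p ∈ Polynomial.degreeLT F k ∧ c = fun i => y i * p.eval (x i)}

/-- Dot product with a fixed vector, as a linear map. -/
noncomputable def dotL {F : Type*} [Field F] {n : ℕ} (l : Fin n → F) :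
    (Fin n → F) →ₗ[F] F where
  toFun p := l ⬝ᵥ p
  map_add' p q := by simp [dotProduct, mul_add, Finset.sum_add_distrib]
  map_smul' c p := by
    simp [dotProduct, Finset.mul_sum, smul_eq_mul, mul_comm, mul_left_comm]

/-- The map `p ↦ p + ⟨l,p⟩ • a` as a linear map. -/
noncomputable def psi {F : Type*} [Field F] {n : ℕ} (l a : Fin n → F) :
    (Fin n → F) →ₗ[F] (Fin n → F) :=
  LinearMap.id + (dotL l).smulRight a

/-- Evaluation map as a linear map. -/
noncomputable def evalL {F : Type*} [Field F] {ι : Type*} (x y : ι → F) :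
    Polynomial F →ₗ[F] (ι → F) where
  toFun p := fun i => y i * p.eval (x i)
  map_add' p q := by funext i; simp [mul_add]
  map_smul' c p := by funext i; simp [mul_comm, mul_left_comm]

lemma GRS_eq_map {F : Type*} [Field F] {ι : Type*} (k : ℕ) (x y : ι → F) :
    GRS k x y = Submodule.map (evalL x y) (Polynomial.degreeLT F k) := by
  rw [GRS, ← Submodule.span_eq (Submodule.map (evalL x y) (Polynomial.degreeLT F k))]
  congr 1
  ext c
  simp only [Set.mem_setOf_eq, Submodule.map_coe, Set.mem_image, SetLike.mem_coe]
  constructor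
  · rintro ⟨p, hp, rfl⟩; exact ⟨p, hp, rfl⟩
  · rintro ⟨p, hp, rfl⟩; exact ⟨p, hp, rfl⟩

lemma finrank_GRS_le {F : Type*} [Field F] {ι : Type*} (k : ℕ) (x y : ι → F) :
    Module.finrank F (GRS k x y) ≤ k := by
  rw [GRS_eq_map]
  have h1 : Module.finrank F (Polynomial.degreeLT F k) = k := by
    rw [(Polynomial.degreeLTEquiv F k).finrank_eq, Module.finrank_fin_fun]
  haveI : Module.Finite F (Polynomial.degreeLT F k) :=
    Module.Finite.equiv (Polynomial.degreeLTEquiv F k).symm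
  calc Module.finrank F (Submodule.map (evalL x y) (Polynomial.degreeLT F k))
      ≤ Module.finrank F (Polynomial.degreeLT F k) := Submodule.finrank_map_le _ _
    _ = k := h1

lemma starProd_GRS_le {F : Type*} [Field F] {ι : Type*} (k : ℕ) (x y : ι → F) :
    starProd (GRS k x y) (GRS k x y) ≤ GRS (2 * k - 1) x (y * y) := by
  rw [starProd, Submodule.span_le]
  rintro w ⟨v, hv, u, hu, rfl⟩
  rw [GRS_eq_map] at hv hu ⊢
  obtain ⟨p, hp, rfl⟩ := hv
  obtain ⟨q, hq, rfl⟩ := hu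
  refine ⟨p * q, ?_, ?_⟩
  · simp only [SetLike.mem_coe, Polynomial.mem_degreeLT] at hp hq ⊢
    by_cases h : p * q = 0
    · rw [h, Polynomial.degree_zero]
      exact WithBot.bot_lt_coe _
    · have hp0 : p ≠ 0 := fun h0 => h (by simp [h0])
      have hq0 : q ≠ 0 := fun h0 => h (by simp [h0])
      have h1 : p.natDegree < k := (Polynomial.natDegree_lt_iff_degree_lt hp0).2 hp
      have h2 : q.natDegree < k := (Polynomial.natDegree_lt_iff_degree_lt hq0).2 hq
      have h3 : (p * q).natDegree ≤ p.natDegree + q.natDegree := Polynomial.natDegree_mul_le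
      rw [← Polynomial.natDegree_lt_iff_degree_lt h]
      omega
  · funext i
    simp [evalL, Pi.mul_apply]
    ring

theorem stmt14 {F : Type*} [Field F] [Fintype F] {n k : ℕ} (hkn : 2 * k ≤ n + 1)
    (x y : Fin n → F) (hx : Function.Injective x) (hy : ∀ i, y i ≠ 0)
    (l a : Fin n → F)
    (z : Fin 3 → (Fin n → F)) (hz : ∀ i, z i ∈ GRS k x y) (hzl : ∀ i, l ⬝ᵥ z i = 0)
    (g : Fin k → (Fin n → F)) (hg : LinearIndependent F g)
    (hgC : Submodule.span F (Set.range g) = Submodule.map (psi l a) (GRS k x y)) :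
    Submodule.span F {w | ∃ i j, w = z i * g j} ≤
      starProd (GRS k x y) (GRS k x y) ⊔ Submodule.span F (Set.range fun i => z i * a) ∧
    Module.finrank F ↥(Submodule.span F {w | ∃ i j, w = z i * g j}) ≤ 2 * k + 2 := by
  have hle : Submodule.span F {w | ∃ i j, w = z i * g j} ≤
      starProd (GRS k x y) (GRS k x y) ⊔ Submodule.span F (Set.range fun i => z i * a) := by
    rw [Submodule.span_le]
    rintro w ⟨i, j, rfl⟩
    have hgj : g j ∈ Submodule.map (psi l a) (GRS k x y) := by
      rw [← hgC]; exact Submodule.subset_span (Set.mem_range_self j)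
    obtain ⟨p, hp, hpj⟩ := hgj
    have hpsi : psi l a p = p + (l ⬝ᵥ p) • a := by
      simp [psi, dotL, LinearMap.smulRight]
      rfl
    have heq : z i * g j = z i * p + (l ⬝ᵥ p) • (z i * a) := by
      rw [← hpj, hpsi, mul_add, mul_smul_comm]
    rw [heq]
    apply Submodule.add_mem_sup
    · exact Submodule.subset_span ⟨z i, hz i, p, hp, rfl⟩
    · exact Submodule.smul_mem _ _ (Submodule.subset_span (Set.mem_range_self i))
  refine ⟨hle, ?_⟩
  by_cases hk : k = 0
  · subst hk
    have hempty : {w : Fin n → F | ∃ i j, w = z i * g j} = ∅ := by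
      ext w; simp only [Set.mem_setOf_eq, Set.mem_empty_iff_false, iff_false]
      rintro ⟨i, j, -⟩; exact Fin.elim0 j
    rw [hempty, Submodule.span_empty]
    simp
  · have hk1 : 1 ≤ k := Nat.one_le_iff_ne_zero.2 hk
    have h1 : Module.finrank F (starProd (GRS k x y) (GRS k x y)) ≤ 2 * k - 1 :=
      le_trans (Submodule.finrank_mono (starProd_GRS_le k x y)) (finrank_GRS_le _ x _)
    have h2 : Module.finrank F (Submodule.span F (Set.range fun i => z i * a)) ≤ 3 := by
      classical
      calc Module.finrank F (Submodule.span F (Set.range fun i => z i * a))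
          ≤ (Set.range fun i => z i * a).toFinset.card := finrank_span_le_card _
        _ ≤ 3 := by
            rw [Set.toFinset_range]
            exact le_trans (Finset.card_image_le) (by simp)
    calc Module.finrank F ↥(Submodule.span F {w | ∃ i j, w = z i * g j})
        ≤ Module.finrank F ↥(starProd (GRS k x y) (GRS k x y) ⊔
            Submodule.span F (Set.range fun i => z i * a)) := Submodule.finrank_mono hle
      _ ≤ Module.finrank F (starProd (GRS k x y) (GRS k x y)) +
            Module.finrank F (Submodule.span F (Set.range fun i => z i * a)) :=
          Submodule.finrank_add_le_finrank_add_finrank _ _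
      _ ≤ 2 * k + 2 := by omega
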